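/- Suppose F_1, …, F_m are acyclic simple graphs (forests) on the same finite vertex set V, with |V| = n ≥ 1, having no cooperative coloring. Then there exist acyclic simple graphs F'_1, …, F'_m, F'_{m+1} on a common finite vertex set V' with |V'| = n² + n, having no cooperative coloring, such that the maximum degree of F'_i equals the maximum degree of F_i for each i ≤ m, and the maximum degree of F'_{m+1} is at most n. -/

import Mathlib

open SimpleGraph



/-- A set of vertices is independent in the graph `G`:
no two of its vertices are adjacent. -/
def IndepIn {V : Type*} (G : SimpleGraph V) (I : Set V) : Prop :=
  ∀ ⦃u⦄, u ∈ I → ∀ ⦃v⦄, v ∈ I → ¬ G.Adj u v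

/-- `(I j)` is a cooperative coloring for the system `G` of graphs:
each `I j` is independent in `G j` and the sets `I j` cover all vertices. -/
def IsCoopColoring {V : Type*} {m : ℕ} (G : Fin m → SimpleGraph V)
    (I : Fin m → Set V) : Prop :=
  (∀ j, IndepIn (G j) (I j)) ∧ (⋃ j, I j) = Set.univ

/-- The system `G` of graphs has a cooperative coloring. -/
def HasCoopColoring {V : Type*} {m : ℕ} (G : Fin m → SimpleGraph V) : Prop :=
  ∃ I : Fin m → Set V, IsCoopColoring G I

/-- The maximum degree of a graph on a finite vertex set. -/
noncomputable def maxDeg {V : Type*} [Fintype V] (G : SimpleGraph V) : ℕ :=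
  Finset.univ.sup fun v => (G.neighborSet v).ncard



section Aux

/-- Mapping a cycle along a hom injective on the support gives a cycle. -/
lemma walk_map_isCycle_of_injOn {V W : Type*} {G : SimpleGraph V} {H : SimpleGraph W}
    (f : G →g H) {u : V} {p : G.Walk u u} (hp : p.IsCycle)
    (hinj : Set.InjOn f {x | x ∈ p.support}) : (p.map f).IsCycle := by
  rw [SimpleGraph.Walk.isCycle_def] at hp ⊢
  obtain ⟨ht, hne, hnd⟩ := hp
  refine ⟨?_, ?_, ?_⟩
  · rw [SimpleGraph.Walk.isTrail_def, SimpleGraph.Walk.edges_map]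
    refine List.Nodup.map_on ?_ ht.edges_nodup
    intro e he e' he' heq
    induction e with
    | h a b =>
    induction e' with
    | h c d =>
    have ha := SimpleGraph.Walk.fst_mem_support_of_mem_edges p he
    have hb := SimpleGraph.Walk.snd_mem_support_of_mem_edges p he
    have hc := SimpleGraph.Walk.fst_mem_support_of_mem_edges p he'
    have hd := SimpleGraph.Walk.snd_mem_support_of_mem_edges p he'
    rw [Sym2.map_pair_eq, Sym2.map_pair_eq, Sym2.eq_iff] at heq
    rcases heq with ⟨h1, h2⟩ | ⟨h1, h2⟩
    · rw [hinj ha hc h1, hinj hb hd h2]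
    · rw [hinj ha hd h1, hinj hb hc h2, Sym2.eq_swap]
  · rw [Ne, SimpleGraph.Walk.map_eq_nil_iff]; exact hne
  · rw [SimpleGraph.Walk.support_map, ← List.map_tail]
    refine List.Nodup.map_on ?_ hnd
    intro a ha b hb
    exact hinj (List.mem_of_mem_tail ha) (List.mem_of_mem_tail hb)

variable {V : Type*} {A : Type*}

/-- Disjoint copies of `G`, indexed by `A`. -/
def copyG (G : SimpleGraph V) : SimpleGraph (V × A) where
  Adj x y := x.2 = y.2 ∧ G.Adj x.1 y.1
  symm := ⟨fun x y ⟨h1, h2⟩ => ⟨h1.symm, h2.symm⟩⟩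
  loopless := ⟨fun x ⟨_, h⟩ => G.loopless.irrefl _ h⟩

lemma copyG_support_snd {G : SimpleGraph V} {x y : V × A} (p : (copyG G).Walk x y) :
    ∀ z ∈ p.support, z.2 = x.2 := by
  induction p with
  | nil => intro z hz; simp at hz; rw [hz]
  | cons h q ih =>
    intro z hz
    rw [SimpleGraph.Walk.support_cons, List.mem_cons] at hz
    rcases hz with rfl | hz
    · rfl
    · rw [ih z hz, ← h.1]

lemma copyG_isAcyclic {G : SimpleGraph V} (hG : G.IsAcyclic) :
    (copyG G : SimpleGraph (V × A)).IsAcyclic := by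
  intro v c hc
  refine hG (c.map ((⟨Prod.fst, fun h => h.2⟩ : (copyG G : SimpleGraph (V × A)) →g G)))
    (walk_map_isCycle_of_injOn _ hc ?_)
  intro x hx y hy hxy
  have hxy' : x.1 = y.1 := hxy
  have hx2 := copyG_support_snd c x hx
  have hy2 := copyG_support_snd c y hy
  exact Prod.ext hxy' (hx2.trans hy2.symm)


/-- The forest of `n` stars: for each `k : Fin n`, the vertex `(eV.symm k, none)`
is joined to all vertices `(w, some k)`. -/
def starG {n : ℕ} (eV : V ≃ Fin n) : SimpleGraph (V × Option (Fin n)) where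
  Adj x y := (x.2 = none ∧ ∃ k, y.2 = some k ∧ x.1 = eV.symm k) ∨
    (y.2 = none ∧ ∃ k, x.2 = some k ∧ y.1 = eV.symm k)
  symm := ⟨fun x y h => h.symm⟩
  loopless := by
    constructor
    rintro x (⟨h1, k, h2, _⟩ | ⟨h1, k, h2, _⟩) <;> rw [h1] at h2 <;> exact absurd h2 (by simp)

lemma starG_leaf_nbr {n : ℕ} {eV : V ≃ Fin n} {w : V} {k : Fin n} {y : V × Option (Fin n)}
    (h : (starG eV).Adj (w, some k) y) : y = (eV.symm k, none) := by
  rcases h with ⟨h1, _⟩ | ⟨h1, k', h2, h3⟩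
  · exact absurd h1 (by simp)
  · have : k' = k := by simpa using h2.symm
    subst this
    exact Prod.ext h3 h1

lemma starG_no_leaf_cycle {n : ℕ} {eV : V ≃ Fin n} {w : V} {k : Fin n}
    {c : (starG eV).Walk (w, some k) (w, some k)} (hc : c.IsCycle) : False := by
  cases c with
  | nil => exact hc.ne_nil rfl
  | @cons _ y _ h p =>
    have hy : y = (eV.symm k, none) := starG_leaf_nbr h
    rw [SimpleGraph.Walk.cons_isCycle_iff] at hc
    have hne : y ≠ (w, some k) := by rw [hy]; simp
    obtain ⟨z, h', q, hq⟩ := SimpleGraph.Walk.exists_eq_cons_of_ne (Ne.symm hne) p.reverse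
    have hz : z = (eV.symm k, none) := starG_leaf_nbr h'
    have hmem : s((w, some k), z) ∈ p.reverse.edges := by
      rw [hq, SimpleGraph.Walk.edges_cons]; exact List.mem_cons_self
    rw [SimpleGraph.Walk.edges_reverse, List.mem_reverse] at hmem
    rw [hz, ← hy] at hmem
    exact hc.2 hmem

lemma starG_isAcyclic {n : ℕ} (eV : V ≃ Fin n) : (starG eV).IsAcyclic := by
  classical
  rintro ⟨v, a⟩ c hc
  match a with
  | some k => exact starG_no_leaf_cycle hc
  | none =>
    cases c with
    | nil => exact hc.ne_nil rfl
    | @cons _ y _ h p =>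
      obtain ⟨k, hk⟩ : ∃ k, y.2 = some k := by
        rcases h with ⟨_, k, h2, _⟩ | ⟨_, k, h2, _⟩
        · exact ⟨k, h2⟩
        · exact absurd h2 (by simp)
      have hy : y ∈ (SimpleGraph.Walk.cons h p).support := by
        rw [SimpleGraph.Walk.support_cons]
        exact List.mem_cons_of_mem _ p.start_mem_support
      have hrot := hc.rotate hy
      obtain ⟨y1, y2⟩ := y
      simp only at hk
      subst hk
      exact starG_no_leaf_cycle hrot

end Aux

section Main

variable {V : Type*} {A : Type*}

lemma comap_isAcyclic {α β : Type*} (e : α ≃ β) {G : SimpleGraph β} (hG : G.IsAcyclic) :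
    (G.comap ⇑e).IsAcyclic := by
  intro v c hc
  refine hG (c.map ((⟨⇑e, fun h => h⟩ : G.comap ⇑e →g G)))
    (walk_map_isCycle_of_injOn _ hc ?_)
  intro x _ y _ hxy
  exact e.injective hxy

lemma maxDeg_comap {α β : Type*} [Fintype α] [Fintype β] (e : α ≃ β) (G : SimpleGraph β) :
    maxDeg (G.comap ⇑e) = maxDeg G := by
  have key : ∀ v : α, ((G.comap ⇑e).neighborSet v).ncard = (G.neighborSet (e v)).ncard := by
    intro v
    have h1 : (G.comap ⇑e).neighborSet v = ⇑e ⁻¹' (G.neighborSet (e v)) := by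
      ext u; simp [SimpleGraph.neighborSet]
    rw [h1, ← e.image_symm_eq_preimage, Set.ncard_image_of_injective _ e.symm.injective]
  unfold maxDeg
  apply le_antisymm
  · apply Finset.sup_le
    intro v _
    rw [key v]
    exact Finset.le_sup (f := fun w => (G.neighborSet w).ncard) (Finset.mem_univ (e v))
  · apply Finset.sup_le
    intro w _
    have h := key (e.symm w)
    rw [e.apply_symm_apply] at h
    rw [← h]
    exact Finset.le_sup (f := fun v => ((G.comap ⇑e).neighborSet v).ncard)
      (Finset.mem_univ (e.symm w))

lemma copyG_neighborSet (G : SimpleGraph V) (v : V) (a : A) :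
    (copyG G : SimpleGraph (V × A)).neighborSet (v, a) = (fun w => (w, a)) '' G.neighborSet v := by
  ext ⟨w, b⟩
  simp only [SimpleGraph.mem_neighborSet, Set.mem_image]
  constructor
  · rintro ⟨h1, h2⟩
    refine ⟨w, h2, ?_⟩
    simp only at h1
    rw [h1]
  · rintro ⟨u, hu, huw⟩
    rw [Prod.mk.injEq] at huw
    obtain ⟨rfl, rfl⟩ := huw
    exact ⟨rfl, hu⟩

lemma maxDeg_copyG [Fintype V] [Fintype A] [Nonempty A] (G : SimpleGraph V) :
    maxDeg (copyG G : SimpleGraph (V × A)) = maxDeg G := by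
  have key : ∀ (v : V) (a : A),
      ((copyG G : SimpleGraph (V × A)).neighborSet (v, a)).ncard = (G.neighborSet v).ncard := by
    intro v a
    rw [copyG_neighborSet]
    exact Set.ncard_image_of_injective _ (fun x y h => congrArg Prod.fst h)
  unfold maxDeg
  apply le_antisymm
  · apply Finset.sup_le
    rintro ⟨v, a⟩ _
    rw [key v a]
    exact Finset.le_sup (f := fun w => (G.neighborSet w).ncard) (Finset.mem_univ v)
  · apply Finset.sup_le
    intro v _
    obtain ⟨a⟩ := ‹Nonempty A›
    rw [← key v a]
    exact Finset.le_sup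
      (f := fun x : V × A => ((copyG G : SimpleGraph (V × A)).neighborSet x).ncard)
      (Finset.mem_univ (v, a))

lemma maxDeg_starG [Fintype V] {n : ℕ} (hn : 1 ≤ n) (hcard : Fintype.card V = n)
    (eV : V ≃ Fin n) : maxDeg (starG eV) ≤ n := by
  unfold maxDeg
  apply Finset.sup_le
  rintro ⟨v, a⟩ _
  match a with
  | none =>
    have hsub : (starG eV).neighborSet (v, none) ⊆
        Set.range fun w : V => (w, some (eV v)) := by
      rintro ⟨w, b⟩ h
      rcases h with ⟨_, k, h2, h3⟩ | ⟨_, k, h2, _⟩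
      · have hk : k = eV v := by
          simp only at h3
          rw [h3]; simp
        subst hk
        simp only at h2
        exact ⟨w, by rw [h2]⟩
      · exact absurd h2 (by simp)
    calc ((starG eV).neighborSet (v, none)).ncard
        ≤ (Set.range fun w : V => (w, some (eV v))).ncard :=
          Set.ncard_le_ncard hsub (Set.toFinite _)
      _ = (Set.univ : Set V).ncard := by
          rw [← Set.image_univ, Set.ncard_image_of_injective _
            (fun x y h => congrArg Prod.fst h)]
      _ = n := by rw [Set.ncard_univ, Nat.card_eq_fintype_card, hcard]
  | some k =>
    have hsub : (starG eV).neighborSet (v, some k) ⊆ {(eV.symm k, none)} := by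
      intro y hy
      exact starG_leaf_nbr hy
    calc ((starG eV).neighborSet (v, some k)).ncard
        ≤ ({(eV.symm k, none)} : Set (V × Option (Fin n))).ncard :=
          Set.ncard_le_ncard hsub (Set.toFinite _)
      _ = 1 := Set.ncard_singleton _
      _ ≤ n := hn

lemma no_coop_W {n m : ℕ} (eV : V ≃ Fin n) (F : Fin m → SimpleGraph V)
    (hno : ¬ HasCoopColoring F) :
    ¬ HasCoopColoring (fun j : Fin (m + 1) =>
      Fin.lastCases (starG eV) (fun i => copyG (F i)) j) := by
  rintro ⟨I, hind, hcov⟩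
  have key : ∀ a : Option (Fin n), ∃ v : V, (v, a) ∈ I (Fin.last m) := by
    intro a
    by_contra hA
    push_neg at hA
    apply hno
    refine ⟨fun j => {v | (v, a) ∈ I j.castSucc}, fun j => ?_, ?_⟩
    · intro u hu v hv hadj
      have h := hind j.castSucc
      simp only [Fin.lastCases_castSucc] at h
      exact h hu hv ⟨rfl, hadj⟩
    · ext v
      simp only [Set.mem_iUnion, Set.mem_univ, iff_true]
      have hv : (v, a) ∈ ⋃ j, I j := by rw [hcov]; trivial
      obtain ⟨j, hj⟩ := Set.mem_iUnion.mp hv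
      induction j using Fin.lastCases with
      | last => exact absurd hj (hA v)
      | cast i => exact ⟨i, hj⟩
  obtain ⟨v0, hv0⟩ := key none
  obtain ⟨v1, hv1⟩ := key (some (eV v0))
  have hadj : (starG eV).Adj (v0, none) (v1, some (eV v0)) :=
    Or.inl ⟨rfl, eV v0, rfl, (eV.symm_apply_apply v0).symm⟩
  have h := hind (Fin.last m)
  simp only [Fin.lastCases_last] at h
  exact h hv0 hv1 hadj

end Main

/-- From `m` forests on `n ≥ 1` vertices with no cooperative coloring, one can
construct `m + 1` forests on `n² + n` vertices with no cooperative coloring,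
preserving the maximum degrees of the first `m` forests, and such that the new
forest has maximum degree at most `n`. -/
theorem forests_no_coop_coloring_step (m n : ℕ) (hn : 1 ≤ n)
    (V : Type*) [Fintype V] (hcard : Fintype.card V = n)
    (F : Fin m → SimpleGraph V) (hacyc : ∀ i, (F i).IsAcyclic)
    (hno : ¬ HasCoopColoring F) :
    ∃ F' : Fin (m + 1) → SimpleGraph (Fin (n ^ 2 + n)),
      (∀ i, (F' i).IsAcyclic) ∧
      ¬ HasCoopColoring F' ∧
      (∀ i : Fin m, maxDeg (F' i.castSucc) = maxDeg (F i)) ∧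
      maxDeg (F' (Fin.last m)) ≤ n := by
  classical
  let eV : V ≃ Fin n := Fintype.equivFinOfCardEq hcard
  have hcardW : Fintype.card (Fin (n ^ 2 + n)) = Fintype.card (V × Option (Fin n)) := by
    simp [hcard]; ring
  let e : Fin (n ^ 2 + n) ≃ V × Option (Fin n) := Fintype.equivOfCardEq hcardW
  let Gw : Fin (m + 1) → SimpleGraph (V × Option (Fin n)) :=
    fun j => Fin.lastCases (starG eV) (fun i => copyG (F i)) j
  refine ⟨fun j => (Gw j).comap ⇑e, ?_, ?_, ?_, ?_⟩
  · intro j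
    refine comap_isAcyclic e ?_
    induction j using Fin.lastCases with
    | last => simpa only [Gw, Fin.lastCases_last] using starG_isAcyclic eV
    | cast i => simpa only [Gw, Fin.lastCases_castSucc] using copyG_isAcyclic (hacyc i)
  · rintro ⟨I, hind, hcov⟩
    refine no_coop_W eV F hno ⟨fun j => {w | e.symm w ∈ I j}, fun j => ?_, ?_⟩
    · intro u hu v hv hadj
      exact hind j hu hv
        (by simp only [SimpleGraph.comap_adj, Equiv.apply_symm_apply]; exact hadj)
    · ext w
      simp only [Set.mem_iUnion, Set.mem_univ, iff_true, Set.mem_setOf_eq]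
      have hw : e.symm w ∈ ⋃ j, I j := by rw [hcov]; trivial
      obtain ⟨j, hj⟩ := Set.mem_iUnion.mp hw
      exact ⟨j, hj⟩
  · intro i
    rw [maxDeg_comap]
    show maxDeg (Gw i.castSucc) = _
    simp only [Gw, Fin.lastCases_castSucc]
    exact maxDeg_copyG (F i)
  · rw [maxDeg_comap]
    show maxDeg (Gw (Fin.last m)) ≤ n
    simp only [Gw, Fin.lastCases_last]
    exact maxDeg_starG hn hcard eV
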